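/- Two circles with parameters (1, l, n, m) and (1, l₁, n₁, m₁), with centres c = l+in, c₁ = l₁+in₁ and positive squared radii r² = l²+n²-m, r₁² = l₁²+n₁²-m₁, intersect in exactly one point (are tangent) if and only if ⟨C,C₁⟩² = ⟨C,C⟩·⟨C₁,C₁⟩, i.e. (m+m₁-2ll₁-2nn₁)² = 4(l²+n²-m)(l₁²+n₁²-m₁). -/

import Mathlib

open Complex


private lemma tangency_aux (D R R₁ : ℝ) (hD : 0 < D) :
    R / D - ((D + R - R₁) / (2 * D)) ^ 2 = 0 ↔ (D - R - R₁) ^ 2 = 4 * R * R₁ := by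
  have hDne : D ≠ 0 := ne_of_gt hD
  have hkey : 4 * D ^ 2 * (R / D - ((D + R - R₁) / (2 * D)) ^ 2)
      = 4 * R * R₁ - (D - R - R₁) ^ 2 := by
    field_simp
    ring
  constructor
  · intro h
    have h0 : 4 * R * R₁ - (D - R - R₁) ^ 2 = 0 := by rw [← hkey, h]; ring
    linarith
  · intro h
    have h0 : 4 * D ^ 2 * (R / D - ((D + R - R₁) / (2 * D)) ^ 2) = 0 := by
      rw [hkey]; linarith
    rcases mul_eq_zero.mp h0 with h' | h'
    · exfalso; nlinarith
    · exact h'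

theorem tangency_criterion (l n m l₁ n₁ m₁ : ℝ)
    (hr : 0 < l ^ 2 + n ^ 2 - m) (hr₁ : 0 < l₁ ^ 2 + n₁ ^ 2 - m₁)
    (hc : (l + n * I : ℂ) ≠ (l₁ + n₁ * I : ℂ)) :
    (∃! z : ℂ, ‖z - (l + n * I)‖ = Real.sqrt (l ^ 2 + n ^ 2 - m) ∧
        ‖z - (l₁ + n₁ * I)‖ = Real.sqrt (l₁ ^ 2 + n₁ ^ 2 - m₁)) ↔
      (m + m₁ - 2 * l * l₁ - 2 * n * n₁) ^ 2 =
        4 * (l ^ 2 + n ^ 2 - m) * (l₁ ^ 2 + n₁ ^ 2 - m₁) := by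
  set R := l ^ 2 + n ^ 2 - m with hR
  set R₁ := l₁ ^ 2 + n₁ ^ 2 - m₁ with hR₁
  set c : ℂ := l + n * I with hcdef
  set c₁ : ℂ := l₁ + n₁ * I with hc₁def
  have hu : c₁ - c ≠ 0 := sub_ne_zero.mpr (Ne.symm hc)
  set u : ℂ := c₁ - c with hudef
  set D : ℝ := Complex.normSq u with hDdef
  have hD : 0 < D := Complex.normSq_pos.mpr hu
  have hDval : D = (l₁ - l) ^ 2 + (n₁ - n) ^ 2 := by
    simp [hDdef, hudef, hcdef, hc₁def, Complex.normSq_apply]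
    ring
  set x₀ : ℝ := (D + R - R₁) / (2 * D) with hx₀
  set Y : ℝ := R / D - x₀ ^ 2 with hY
  -- Step 1: rewrite abs conditions as normSq conditions
  have habs : ∀ z : ℂ, (‖z - c‖ = Real.sqrt R ∧
      ‖z - c₁‖ = Real.sqrt R₁) ↔
      (Complex.normSq (z - c) = R ∧ Complex.normSq (z - c₁) = R₁) := by
    intro z
    have h1 : ∀ (w : ℂ) (t : ℝ), 0 < t →
        (‖w‖ = Real.sqrt t ↔ Complex.normSq w = t) := by
      intro w t ht
      constructor
      · intro h
        rw [← Complex.sq_norm, h, Real.sq_sqrt ht.le]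
      · intro h
        rw [← Complex.sq_norm] at h
        rw [← Real.sqrt_sq (norm_nonneg w), h]
    rw [h1 _ R hr, h1 _ R₁ hr₁]
  -- Step 2: change variable z = c + u * w, reduce to coordinates
  have key : ∀ w : ℂ, (Complex.normSq (c + u * w - c) = R ∧
      Complex.normSq (c + u * w - c₁) = R₁) ↔ (w.re = x₀ ∧ w.im ^ 2 = Y) := by
    intro w
    have e1 : c + u * w - c = u * w := by ring
    have e2 : c + u * w - c₁ = u * (w - 1) := by rw [hudef]; ring
    rw [e1, e2, Complex.normSq_mul, Complex.normSq_mul, ← hDdef]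
    have hns : Complex.normSq w = w.re ^ 2 + w.im ^ 2 := by
      rw [Complex.normSq_apply]; ring
    have hns1 : Complex.normSq (w - 1) = (w.re - 1) ^ 2 + w.im ^ 2 := by
      rw [Complex.normSq_apply]; simp; ring
    rw [hns, hns1]
    constructor
    · rintro ⟨h1, h2⟩
      have hre : w.re = x₀ := by
        rw [hx₀]; field_simp; nlinarith [h1, h2]
      refine ⟨hre, ?_⟩
      rw [hY, ← hre]
      field_simp
      nlinarith [h1]
    · rintro ⟨hre, him⟩
      have hYv : w.im ^ 2 = R / D - x₀ ^ 2 := him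
      constructor
      · rw [hre, hYv, hx₀]; field_simp; ring
      · rw [hre, hYv, hx₀]; field_simp; ring
  -- Step 3: the unique-existence statement
  have step : (∃! z : ℂ, Complex.normSq (z - c) = R ∧ Complex.normSq (z - c₁) = R₁)
      ↔ (∃! w : ℂ, w.re = x₀ ∧ w.im ^ 2 = Y) := by
    have e : ℂ ≃ ℂ := (Equiv.mulLeft₀ u hu).trans (Equiv.addLeft c)
    calc (∃! z : ℂ, Complex.normSq (z - c) = R ∧ Complex.normSq (z - c₁) = R₁)
        ↔ (∃! w : ℂ, Complex.normSq (c + u * w - c) = R ∧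
            Complex.normSq (c + u * w - c₁) = R₁) := by
          exact (((Equiv.mulLeft₀ u hu).trans (Equiv.addLeft c)).existsUnique_congr_right
            (q := fun z => Complex.normSq (z - c) = R ∧ Complex.normSq (z - c₁) = R₁)).symm
      _ ↔ (∃! w : ℂ, w.re = x₀ ∧ w.im ^ 2 = Y) := existsUnique_congr key
  -- Step 4: unique existence iff Y = 0
  have step4 : (∃! w : ℂ, w.re = x₀ ∧ w.im ^ 2 = Y) ↔ Y = 0 := by
    constructor
    · rintro ⟨w, ⟨hwre, hwim⟩, huniq⟩
      by_contra hY0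
      rcases lt_or_gt_of_ne hY0 with hneg | hpos
      · exact absurd hwim.symm (by nlinarith [sq_nonneg w.im])
      · have h1 : (⟨x₀, Real.sqrt Y⟩ : ℂ) = w :=
          huniq _ ⟨rfl, by simp [Real.sq_sqrt hpos.le]⟩
        have h2 : (⟨x₀, -Real.sqrt Y⟩ : ℂ) = w :=
          huniq _ ⟨rfl, by simp [Real.sq_sqrt hpos.le]⟩
        have : Real.sqrt Y = -Real.sqrt Y := by
          have := h1.trans h2.symm
          simpa [Complex.ext_iff] using this
        have hsq : 0 < Real.sqrt Y := Real.sqrt_pos.mpr hpos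
        linarith
    · intro hY0
      refine ⟨⟨x₀, 0⟩, ⟨rfl, by simp [hY0]⟩, ?_⟩
      rintro w ⟨hwre, hwim⟩
      have : w.im = 0 := by
        have := hwim.trans hY0
        exact pow_eq_zero_iff (n := 2) (by norm_num) |>.mp this
      exact Complex.ext hwre this
  -- Step 5: Y = 0 iff the algebraic condition
  have step5 : Y = 0 ↔ (m + m₁ - 2 * l * l₁ - 2 * n * n₁) ^ 2 = 4 * R * R₁ := by
    have hid : m + m₁ - 2 * l * l₁ - 2 * n * n₁ = D - R - R₁ := by
      rw [hDval, hR, hR₁]; ring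
    rw [hid, hY, hx₀]
    exact tangency_aux D R R₁ hD
  -- assemble
  rw [show (∃! z : ℂ, ‖z - c‖ = Real.sqrt R ∧
      ‖z - c₁‖ = Real.sqrt R₁) ↔ _ from existsUnique_congr habs,
    step, step4, step5]
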